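/- Let X₁,…,X_N be i.i.d. samples from a distribution p on [n] and Z := ∑_{1≤i<j≤N} 1[Xᵢ = Xⱼ]. Then Var[Z] = C(N,2)·‖p‖₂²·(1 − ‖p‖₂²) + 6·C(N,3)·(‖p‖₃³ − ‖p‖₂⁴). -/

import Mathlib

/-- Expectation of `f` under `N` i.i.d. draws from the pmf `p` on `Fin n`. -/
noncomputable def iidExp (n N : ℕ) (p : Fin n → ℝ) (f : (Fin N → Fin n) → ℝ) : ℝ :=
  ∑ X : Fin N → Fin n, (∏ t, p (X t)) * f X

/-- Number of colliding pairs among the samples `X`. -/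
def collisions (n N : ℕ) (X : Fin N → Fin n) : ℝ :=
  ∑ i : Fin N, ∑ j : Fin N, if i < j ∧ X i = X j then 1 else 0

section aux
variable {n N : ℕ} (p : Fin n → ℝ)

lemma iidExp_sum {α : Type*} (s : Finset α) (f : α → (Fin N → Fin n) → ℝ) :
    iidExp n N p (fun X => ∑ a ∈ s, f a X) = ∑ a ∈ s, iidExp n N p (f a) := by
  simp only [iidExp, Finset.mul_sum]
  rw [Finset.sum_comm]

lemma prodExp (g : Fin N → Fin n → ℝ) :
    iidExp n N p (fun X => ∏ t, g t (X t)) = ∏ t, ∑ a, p a * g t a := by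
  rw [Finset.prod_univ_sum, Fintype.piFinset_univ]
  unfold iidExp
  apply Finset.sum_congr rfl
  intro X _
  rw [← Finset.prod_mul_distrib]

lemma expS (hp1 : ∑ i, p i = 1) (S : Finset (Fin N)) (v : Fin N → Fin n) :
    iidExp n N p (fun X => ∏ t ∈ S, (if X t = v t then (1:ℝ) else 0)) = ∏ t ∈ S, p (v t) := by
  have h1 : (fun X : Fin N → Fin n => ∏ t ∈ S, (if X t = v t then (1:ℝ) else 0))
      = fun X => ∏ t, (if t ∈ S then (if X t = v t then (1:ℝ) else 0) else 1) := by
    funext X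
    rw [← Finset.prod_subset (Finset.subset_univ S) (fun x _ hx => by simp [hx])]
    exact Finset.prod_congr rfl (fun x hx => by simp [hx])
  rw [h1, prodExp p (fun t a => if t ∈ S then (if a = v t then (1:ℝ) else 0) else 1)]
  rw [← Finset.prod_subset (Finset.subset_univ S) (fun x _ hx => by simp [hx, hp1])]
  apply Finset.prod_congr rfl
  intro x hx
  simp [hx, mul_ite, Finset.sum_ite_eq']

lemma L2 (hp1 : ∑ i, p i = 1) {i j : Fin N} (hij : i ≠ j) :
    iidExp n N p (fun X => if X i = X j then (1:ℝ) else 0) = ∑ a, p a ^ 2 := by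
  have key : (fun X : Fin N → Fin n => if X i = X j then (1:ℝ) else 0)
      = fun X => ∑ a : Fin n, ∏ t ∈ ({i, j} : Finset (Fin N)),
          (if X t = (fun _ => a) t then (1:ℝ) else 0) := by
    funext X
    simp only [Finset.prod_pair hij]
    rw [Finset.sum_eq_single (X i)]
    · by_cases h : X i = X j <;> simp [h, eq_comm]
    · intro b _ hb; simp [Ne.symm hb]
    · simp
  rw [key, iidExp_sum]
  refine Finset.sum_congr rfl (fun a _ => ?_)
  rw [expS p hp1 {i,j} (fun _ => a), Finset.prod_pair hij, sq]

lemma L3 (hp1 : ∑ i, p i = 1) {i j k : Fin N} (hij : i ≠ j) (hik : i ≠ k) (hjk : j ≠ k) :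
    iidExp n N p (fun X => (if X i = X j then (1:ℝ) else 0) * (if X i = X k then (1:ℝ) else 0))
      = ∑ a, p a ^ 3 := by
  have key : (fun X : Fin N → Fin n =>
        (if X i = X j then (1:ℝ) else 0) * (if X i = X k then (1:ℝ) else 0))
      = fun X => ∑ a : Fin n, ∏ t ∈ ({i, j, k} : Finset (Fin N)),
          (if X t = (fun _ => a) t then (1:ℝ) else 0) := by
    funext X
    have hmem : i ∉ ({j, k} : Finset (Fin N)) := by simp [hij, hik]
    simp only [Finset.prod_insert hmem, Finset.prod_pair hjk]
    rw [Finset.sum_eq_single (X i)]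
    · by_cases h1 : X i = X j <;> by_cases h2 : X i = X k <;> simp [h1, h2, eq_comm] <;> tauto
    · intro b _ hb; simp [Ne.symm hb]
    · simp
  rw [key, iidExp_sum]
  refine Finset.sum_congr rfl (fun a _ => ?_)
  have hmem : i ∉ ({j, k} : Finset (Fin N)) := by simp [hij, hik]
  rw [expS p hp1 _ (fun _ => a), Finset.prod_insert hmem, Finset.prod_pair hjk]
  ring

lemma L4 (hp1 : ∑ i, p i = 1) {i j k l : Fin N} (hij : i ≠ j) (hkl : k ≠ l)
    (hik : i ≠ k) (hil : i ≠ l) (hjk : j ≠ k) (hjl : j ≠ l) :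
    iidExp n N p (fun X => (if X i = X j then (1:ℝ) else 0) * (if X k = X l then (1:ℝ) else 0))
      = (∑ a, p a ^ 2) * (∑ a, p a ^ 2) := by
  classical
  have key : (fun X : Fin N → Fin n =>
        (if X i = X j then (1:ℝ) else 0) * (if X k = X l then (1:ℝ) else 0))
      = fun X => ∑ ab : Fin n × Fin n, ∏ t ∈ ({i, j, k, l} : Finset (Fin N)),
          (if X t = (fun t => if t = k ∨ t = l then ab.2 else ab.1) t then (1:ℝ) else 0) := by
    funext X
    have h1 : i ∉ ({j, k, l} : Finset (Fin N)) := by simp [hij, hik, hil]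
    have h2 : j ∉ ({k, l} : Finset (Fin N)) := by simp [hjk, hjl]
    simp only [Finset.prod_insert h1, Finset.prod_insert h2, Finset.prod_pair hkl]
    rw [Finset.sum_eq_single ((X i, X k) : Fin n × Fin n)]
    · simp only [if_neg (by simp [hik, hil] : ¬(i = k ∨ i = l)),
        if_neg (by simp [hjk, hjl] : ¬(j = k ∨ j = l)),
        if_pos (by simp : k = k ∨ k = l), if_pos (by simp : l = k ∨ l = l)]
      by_cases a1 : X i = X j <;> by_cases a2 : X k = X l <;> simp [a1, a2, eq_comm]
    · intro b _ hb
      simp only [if_neg (by simp [hik, hil] : ¬(i = k ∨ i = l)),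
        if_neg (by simp [hjk, hjl] : ¬(j = k ∨ j = l)),
        if_pos (by simp : k = k ∨ k = l), if_pos (by simp : l = k ∨ l = l)]
      have hb' : ¬(X i = b.1 ∧ X k = b.2) := by
        rintro ⟨u, w⟩; exact hb (by rw [u, w])
      by_cases hb1 : X i = b.1 <;> by_cases hb2 : X k = b.2 <;> simp [hb1, hb2] <;> tauto
    · simp
  rw [key, iidExp_sum]
  rw [Fintype.sum_prod_type, Finset.sum_mul_sum]
  refine Finset.sum_congr rfl (fun a _ => ?_)
  refine Finset.sum_congr rfl (fun b _ => ?_)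
  have h1 : i ∉ ({j, k, l} : Finset (Fin N)) := by simp [hij, hik, hil]
  have h2 : j ∉ ({k, l} : Finset (Fin N)) := by simp [hjk, hjl]
  rw [expS p hp1 _ _, Finset.prod_insert h1, Finset.prod_insert h2, Finset.prod_pair hkl]
  simp only [if_neg (by simp [hik, hil] : ¬(i = k ∨ i = l)),
    if_neg (by simp [hjk, hjl] : ¬(j = k ∨ j = l)), eq_self_iff_true, true_or, or_true, if_true]
  ring

lemma iteq_comm (x y : Fin n) : (if x = y then (1:ℝ) else 0) = if y = x then 1 else 0 := by
  by_cases h : x = y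
  · simp [h]
  · rw [if_neg h, if_neg (fun hh => h hh.symm)]

lemma eMaster (hp1 : ∑ i, p i = 1) {i j k l : Fin N} (hij : i < j) (hkl : k < l) :
    iidExp n N p (fun X => (if X i = X j then (1:ℝ) else 0) * (if X k = X l then (1:ℝ) else 0))
      = (∑ a, p a ^ 2) ^ 2
        + ((∑ a, p a ^ 3) - (∑ a, p a ^ 2) ^ 2) *
            ((if i = k then (1:ℝ) else 0) + (if i = l then 1 else 0)
              + (if j = k then 1 else 0) + (if j = l then 1 else 0))
        + ((∑ a, p a ^ 2) + (∑ a, p a ^ 2) ^ 2 - 2 * (∑ a, p a ^ 3)) *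
            (if i = k ∧ j = l then (1:ℝ) else 0) := by
  have hijne : i ≠ j := ne_of_lt hij
  have hklne : k ≠ l := ne_of_lt hkl
  by_cases hik : i = k
  · subst hik
    by_cases hjl : j = l
    · subst hjl
      have e1 : (fun X : Fin N → Fin n =>
            (if X i = X j then (1:ℝ) else 0) * (if X i = X j then (1:ℝ) else 0))
          = fun X => if X i = X j then (1:ℝ) else 0 := by
        funext X; by_cases h : X i = X j <;> simp [h]
      rw [e1, L2 p hp1 hijne, if_pos (rfl : i = i), if_neg hijne, if_neg hijne.symm,
        if_pos (rfl : j = j), if_pos (⟨rfl, rfl⟩ : i = i ∧ j = j)]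
      ring
    · rw [L3 p hp1 hijne (ne_of_lt hkl) hjl, if_pos (rfl : i = i), if_neg (ne_of_lt hkl),
        if_neg hijne.symm, if_neg hjl, if_neg (fun h : i = i ∧ j = l => hjl h.2)]
      ring
  · by_cases hil : i = l
    · subst hil
      have e1 : (fun X : Fin N → Fin n =>
            (if X i = X j then (1:ℝ) else 0) * (if X k = X i then (1:ℝ) else 0))
          = fun X => (if X i = X j then (1:ℝ) else 0) * (if X i = X k then (1:ℝ) else 0) := by
        funext X; rw [iteq_comm (X k) (X i)]
      rw [e1, L3 p hp1 hijne hik (ne_of_lt (hkl.trans hij)).symm, if_neg hik,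
        if_pos (rfl : i = i), if_neg (ne_of_lt (hkl.trans hij)).symm, if_neg hijne.symm,
        if_neg (fun h : i = k ∧ j = i => hik h.1)]
      ring
    · by_cases hjk : j = k
      · subst hjk
        have e1 : (fun X : Fin N → Fin n =>
              (if X i = X j then (1:ℝ) else 0) * (if X j = X l then (1:ℝ) else 0))
            = fun X => (if X j = X i then (1:ℝ) else 0) * (if X j = X l then (1:ℝ) else 0) := by
          funext X; rw [iteq_comm (X i) (X j)]
        rw [e1, L3 p hp1 hijne.symm (ne_of_lt hkl) hil, if_neg hijne, if_neg hil,
          if_pos (rfl : j = j), if_neg (ne_of_lt hkl), if_neg (fun h : i = j ∧ j = l => hijne h.1)]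
        ring
      · by_cases hjl : j = l
        · subst hjl
          have e1 : (fun X : Fin N → Fin n =>
                (if X i = X j then (1:ℝ) else 0) * (if X k = X j then (1:ℝ) else 0))
              = fun X => (if X j = X i then (1:ℝ) else 0) * (if X j = X k then (1:ℝ) else 0) := by
            funext X; rw [iteq_comm (X i) (X j), iteq_comm (X k) (X j)]
          rw [e1, L3 p hp1 hijne.symm (ne_of_lt hkl).symm hik, if_neg hik, if_neg hijne,
            if_neg (ne_of_lt hkl).symm, if_pos (rfl : j = j),
            if_neg (fun h : i = k ∧ j = j => hik h.1)]
          ring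
        · rw [L4 p hp1 hijne hklne hik hil hjk hjl, if_neg hik, if_neg hil, if_neg hjk,
            if_neg hjl, if_neg (fun h : i = k ∧ j = l => hik h.1)]
          ring

end aux

section count
variable {N : ℕ}

private def q (i j : Fin N) : ℝ := if i < j then 1 else 0
private def dd (i j : Fin N) : ℝ := if i = j then 1 else 0

private lemma q_sq (i j : Fin N) : q i j * q i j = q i j := by
  unfold q; by_cases h : i < j <;> simp [h]

private lemma gh (i : Fin N) : (∑ j, q i j) + (∑ j, q j i) = (N : ℝ) - 1 := by
  rw [← Finset.sum_add_distrib]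
  have : ∀ j : Fin N, q i j + q j i = 1 - dd i j := by
    intro j
    unfold q dd
    rcases lt_trichotomy i j with h | h | h
    · simp [h, lt_asymm h, ne_of_lt h]
    · simp [h, lt_irrefl]
    · simp [h, lt_asymm h, (ne_of_lt h : j ≠ i).symm]
  rw [Finset.sum_congr rfl (fun j _ => this j), Finset.sum_sub_distrib]
  simp [dd, Finset.sum_ite_eq]

private lemma sum_q_symm : (∑ i : Fin N, ∑ j, q i j) = ∑ i : Fin N, ∑ j, q j i :=
  Finset.sum_comm

private lemma countP : (∑ i : Fin N, ∑ j, q i j) * 2 = N * ((N:ℝ) - 1) := by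
  have h : (∑ i : Fin N, ∑ j, q i j) * 2
      = ∑ i : Fin N, ((∑ j, q i j) + (∑ j, q j i)) := by
    rw [Finset.sum_add_distrib, ← sum_q_symm]; ring
  rw [h, Finset.sum_congr rfl (fun i _ => gh i)]
  simp [mul_comm]
  ring

private lemma countD :
    (∑ i : Fin N, ∑ k, ∑ j, ∑ l, q i j * q k l * (if i = k ∧ j = l then (1:ℝ) else 0))
      = ∑ i : Fin N, ∑ j, q i j := by
  refine Finset.sum_congr rfl (fun i _ => ?_)
  have inner : ∀ k, (∑ j, ∑ l, q i j * q k l * (if i = k ∧ j = l then (1:ℝ) else 0))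
      = dd i k * ∑ j, q i j * q k j := by
    intro k
    rw [Finset.mul_sum]
    refine Finset.sum_congr rfl (fun j _ => ?_)
    have : ∀ l, q i j * q k l * (if i = k ∧ j = l then (1:ℝ) else 0)
        = if j = l then q i j * q k l * dd i k else 0 := by
      intro l; unfold dd; by_cases h1 : i = k <;> by_cases h2 : j = l <;> simp [h1, h2] <;> ring
    rw [Finset.sum_congr rfl (fun l _ => this l), Finset.sum_ite_eq Finset.univ j]
    simp; ring
  rw [Finset.sum_congr rfl (fun k _ => inner k)]
  simp only [dd, ite_mul, one_mul, zero_mul]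
  rw [Finset.sum_ite_eq Finset.univ i (fun k => ∑ j, q i j * q k j)]
  simp [q_sq]

private lemma countU :
    (∑ i : Fin N, ∑ k, ∑ j, ∑ l, q i j * q k l * (dd i k + dd i l + dd j k + dd j l))
      = N * ((N:ℝ) - 1) ^ 2 := by
  have split : (∑ i : Fin N, ∑ k, ∑ j, ∑ l, q i j * q k l * (dd i k + dd i l + dd j k + dd j l))
      = (∑ i : Fin N, ∑ k, ∑ j, ∑ l, q i j * q k l * dd i k)
        + (∑ i : Fin N, ∑ k, ∑ j, ∑ l, q i j * q k l * dd i l)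
        + (∑ i : Fin N, ∑ k, ∑ j, ∑ l, q i j * q k l * dd j k)
        + (∑ i : Fin N, ∑ k, ∑ j, ∑ l, q i j * q k l * dd j l) := by
    simp only [mul_add, Finset.sum_add_distrib]
  have U1 : (∑ i : Fin N, ∑ k, ∑ j, ∑ l, q i j * q k l * dd i k)
      = ∑ i : Fin N, (∑ j, q i j) * (∑ j, q i j) := by
    refine Finset.sum_congr rfl (fun i _ => ?_)
    have hk : ∀ k : Fin N, (∑ j, ∑ l, q i j * q k l * dd i k)
        = if i = k then ((∑ j, q i j) * (∑ l, q k l)) else 0 := by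
      intro k
      by_cases h : i = k
      · simp only [dd, if_pos h, mul_one, Finset.sum_mul_sum]
      · simp [dd, h]
    rw [Finset.sum_congr rfl (fun k _ => hk k), Finset.sum_ite_eq]
    simp
  have U2 : (∑ i : Fin N, ∑ k, ∑ j, ∑ l, q i j * q k l * dd i l)
      = ∑ i : Fin N, (∑ j, q i j) * (∑ j, q j i) := by
    refine Finset.sum_congr rfl (fun i _ => ?_)
    have hk : ∀ k : Fin N, (∑ j, ∑ l, q i j * q k l * dd i l) = (∑ j, q i j) * q k i := by
      intro k
      have hl : ∀ j, (∑ l, q i j * q k l * dd i l) = q i j * q k i := by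
        intro j
        have : ∀ l, q i j * q k l * dd i l = if i = l then q i j * q k l else 0 := by
          intro l; unfold dd; by_cases h : i = l <;> simp [h]
        rw [Finset.sum_congr rfl (fun l _ => this l), Finset.sum_ite_eq]
        simp
      rw [Finset.sum_congr rfl (fun j _ => hl j), ← Finset.sum_mul]
    rw [Finset.sum_congr rfl (fun k _ => hk k), ← Finset.mul_sum]
  have U3 : (∑ i : Fin N, ∑ k, ∑ j, ∑ l, q i j * q k l * dd j k)
      = ∑ i : Fin N, (∑ j, q j i) * (∑ j, q i j) := by
    have step : ∀ i k : Fin N, (∑ j, ∑ l, q i j * q k l * dd j k) = q i k * (∑ l, q k l) := by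
      intro i k
      have hl : ∀ j, (∑ l, q i j * q k l * dd j k) = q i j * (∑ l, q k l) * dd j k := by
        intro j
        rw [Finset.mul_sum, Finset.sum_mul]
      rw [Finset.sum_congr rfl (fun j _ => hl j)]
      have : ∀ j, q i j * (∑ l, q k l) * dd j k = if j = k then q i j * (∑ l, q k l) else 0 := by
        intro j; unfold dd; by_cases h : j = k <;> simp [h]
      rw [Finset.sum_congr rfl (fun j _ => this j), Finset.sum_ite_eq']
      simp
    calc (∑ i : Fin N, ∑ k, ∑ j, ∑ l, q i j * q k l * dd j k)
        = ∑ i : Fin N, ∑ k, q i k * (∑ l, q k l) := by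
          exact Finset.sum_congr rfl (fun i _ => Finset.sum_congr rfl (fun k _ => step i k))
      _ = ∑ k : Fin N, ∑ i, q i k * (∑ l, q k l) := Finset.sum_comm
      _ = ∑ k : Fin N, (∑ i, q i k) * (∑ l, q k l) := by
          exact Finset.sum_congr rfl (fun k _ => by rw [← Finset.sum_mul])
  have U4 : (∑ i : Fin N, ∑ k, ∑ j, ∑ l, q i j * q k l * dd j l)
      = ∑ i : Fin N, (∑ j, q j i) * (∑ j, q j i) := by
    have step : ∀ i k : Fin N, (∑ j, ∑ l, q i j * q k l * dd j l) = ∑ j, q i j * q k j := by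
      intro i k
      refine Finset.sum_congr rfl (fun j _ => ?_)
      have : ∀ l, q i j * q k l * dd j l = if j = l then q i j * q k l else 0 := by
        intro l; unfold dd; by_cases h : j = l <;> simp [h]
      rw [Finset.sum_congr rfl (fun l _ => this l), Finset.sum_ite_eq]
      simp
    calc (∑ i : Fin N, ∑ k, ∑ j, ∑ l, q i j * q k l * dd j l)
        = ∑ i : Fin N, ∑ k, ∑ j, q i j * q k j := by
          exact Finset.sum_congr rfl (fun i _ => Finset.sum_congr rfl (fun k _ => step i k))
      _ = ∑ i : Fin N, ∑ j, ∑ k, q i j * q k j := by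
          exact Finset.sum_congr rfl (fun i _ => Finset.sum_comm)
      _ = ∑ j : Fin N, ∑ i, ∑ k, q i j * q k j := Finset.sum_comm
      _ = ∑ j : Fin N, (∑ i, q i j) * (∑ k, q k j) := by
          refine Finset.sum_congr rfl (fun j _ => ?_)
          rw [Finset.sum_mul_sum]
  rw [split, U1, U2, U3, U4]
  rw [← Finset.sum_add_distrib, ← Finset.sum_add_distrib, ← Finset.sum_add_distrib]
  have key : ∀ i ∈ (Finset.univ : Finset (Fin N)),
      (∑ j, q i j) * (∑ j, q i j) + (∑ j, q i j) * (∑ j, q j i)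
        + (∑ j, q j i) * (∑ j, q i j) + (∑ j, q j i) * (∑ j, q j i)
      = ((N:ℝ) - 1) ^ 2 := by
    intro i _
    have h := gh i
    calc (∑ j, q i j) * (∑ j, q i j) + (∑ j, q i j) * (∑ j, q j i)
        + (∑ j, q j i) * (∑ j, q i j) + (∑ j, q j i) * (∑ j, q j i)
        = ((∑ j, q i j) + (∑ j, q j i)) ^ 2 := by ring
      _ = ((N:ℝ) - 1) ^ 2 := by rw [h]
  rw [Finset.sum_congr rfl key]
  simp [Finset.card_univ, mul_comm]

private lemma countT :
    (∑ i : Fin N, ∑ k : Fin N, ∑ j : Fin N, ∑ l : Fin N, q i j * q k l)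
      = (∑ i : Fin N, ∑ j, q i j) * (∑ i : Fin N, ∑ j, q i j) := by
  calc (∑ i : Fin N, ∑ k : Fin N, ∑ j : Fin N, ∑ l : Fin N, q i j * q k l)
      = ∑ i : Fin N, ∑ k : Fin N, (∑ j, q i j) * (∑ l, q k l) := by
        refine Finset.sum_congr rfl (fun i _ => Finset.sum_congr rfl (fun k _ => ?_))
        rw [Finset.sum_mul_sum Finset.univ Finset.univ (fun j => q i j) (fun l => q k l)]
    _ = (∑ i : Fin N, ∑ j, q i j) * (∑ i : Fin N, ∑ j, q i j) := by
        rw [Finset.sum_mul_sum Finset.univ Finset.univ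
          (fun i => ∑ j, q i j) (fun k => ∑ l, q k l)]

private lemma pull {N : ℕ} (c : ℝ) (f : Fin N → Fin N → Fin N → Fin N → ℝ) :
    (∑ i : Fin N, ∑ k, ∑ j, ∑ l, c * f i k j l)
      = c * ∑ i : Fin N, ∑ k, ∑ j, ∑ l, f i k j l := by
  simp only [← Finset.mul_sum]

end count

private lemma chooseR2 (N : ℕ) : (N.choose 2 : ℝ) = N * ((N:ℝ) - 1) / 2 := by
  induction N with
  | zero => simp
  | succ m ih =>
    rw [Nat.choose_succ_succ m 1, Nat.choose_one_right]
    push_cast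
    rw [ih]
    ring

private lemma chooseR3 (N : ℕ) : (N.choose 3 : ℝ) = N * ((N:ℝ) - 1) * ((N:ℝ) - 2) / 6 := by
  induction N with
  | zero => simp
  | succ m ih =>
    rw [Nat.choose_succ_succ m 2]
    push_cast
    rw [ih, chooseR2]
    ring

theorem stmt_15 (n N : ℕ) (p : Fin n → ℝ)
    (hp : ∀ i, 0 ≤ p i) (hp1 : ∑ i, p i = 1) :
    iidExp n N p (fun X => (collisions n N X) ^ 2)
        - (iidExp n N p (collisions n N)) ^ 2
      = (N.choose 2 : ℝ) * (∑ i, (p i) ^ 2) * (1 - ∑ i, (p i) ^ 2)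
          + 6 * (N.choose 3 : ℝ) * ((∑ i, (p i) ^ 3) - (∑ i, (p i) ^ 2) ^ 2) := by
  classical
  set s2 : ℝ := ∑ a, p a ^ 2 with hs2
  set s3 : ℝ := ∑ a, p a ^ 3 with hs3
  -- first moment
  have Eterm : ∀ i j : Fin N,
      iidExp n N p (fun X => if i < j ∧ X i = X j then (1:ℝ) else 0) = q i j * s2 := by
    intro i j
    by_cases h : i < j
    · simp only [h, true_and]
      rw [L2 p hp1 (ne_of_lt h)]
      unfold q
      simp [h]
      rfl
    · have : (fun X : Fin N → Fin n => if i < j ∧ X i = X j then (1:ℝ) else 0)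
          = fun _ => (0:ℝ) := by
        funext X; simp [h]
      rw [this]
      unfold q
      simp [h, iidExp]
  have EZ : iidExp n N p (collisions n N) = (∑ i : Fin N, ∑ j, q i j) * s2 := by
    have hc : collisions n N
        = fun X => ∑ i : Fin N, ∑ j : Fin N, if i < j ∧ X i = X j then (1:ℝ) else 0 := rfl
    rw [hc, iidExp_sum]
    rw [Finset.sum_congr rfl (fun i _ => iidExp_sum p Finset.univ
      (fun j X => if i < j ∧ X i = X j then (1:ℝ) else 0))]
    rw [Finset.sum_congr rfl (fun i _ => Finset.sum_congr rfl (fun j _ => Eterm i j))]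
    simp only [← Finset.sum_mul]
  -- second moment
  have hZ2 : (fun X => collisions n N X ^ 2)
      = fun X => ∑ i : Fin N, ∑ k, ∑ j, ∑ l,
          (if i < j ∧ X i = X j then (1:ℝ) else 0) * (if k < l ∧ X k = X l then (1:ℝ) else 0) := by
    funext X
    rw [sq]
    unfold collisions
    rw [Finset.sum_mul_sum]
    refine Finset.sum_congr rfl (fun i _ => ?_)
    refine Finset.sum_congr rfl (fun k _ => ?_)
    rw [Finset.sum_mul_sum]
  have Qterm : ∀ i k j l : Fin N,
      iidExp n N p (fun X =>
        (if i < j ∧ X i = X j then (1:ℝ) else 0) * (if k < l ∧ X k = X l then (1:ℝ) else 0))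
      = q i j * q k l *
          (s2 ^ 2 + (s3 - s2 ^ 2) * (dd i k + dd i l + dd j k + dd j l)
            + (s2 + s2 ^ 2 - 2 * s3) * (if i = k ∧ j = l then (1:ℝ) else 0)) := by
    intro i k j l
    by_cases hij : i < j
    · by_cases hkl : k < l
      · simp only [hij, hkl, true_and]
        rw [eMaster p hp1 hij hkl]
        unfold q dd
        simp only [if_pos hij, if_pos hkl, one_mul]
        rfl
      · have : (fun X : Fin N → Fin n =>
            (if i < j ∧ X i = X j then (1:ℝ) else 0) * (if k < l ∧ X k = X l then (1:ℝ) else 0))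
            = fun _ => (0:ℝ) := by
          funext X; simp [hkl]
        rw [this]
        unfold q
        simp [hkl, iidExp]
    · have : (fun X : Fin N → Fin n =>
          (if i < j ∧ X i = X j then (1:ℝ) else 0) * (if k < l ∧ X k = X l then (1:ℝ) else 0))
          = fun _ => (0:ℝ) := by
        funext X; simp [hij]
      rw [this]
      unfold q
      simp [hij, iidExp]
  have EZ2 : iidExp n N p (fun X => collisions n N X ^ 2)
      = ∑ i : Fin N, ∑ k, ∑ j, ∑ l, q i j * q k l *
          (s2 ^ 2 + (s3 - s2 ^ 2) * (dd i k + dd i l + dd j k + dd j l)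
            + (s2 + s2 ^ 2 - 2 * s3) * (if i = k ∧ j = l then (1:ℝ) else 0)) := by
    rw [hZ2, iidExp_sum]
    refine Finset.sum_congr rfl (fun i _ => ?_)
    rw [iidExp_sum]
    refine Finset.sum_congr rfl (fun k _ => ?_)
    rw [iidExp_sum]
    refine Finset.sum_congr rfl (fun j _ => ?_)
    rw [iidExp_sum]
    exact Finset.sum_congr rfl (fun l _ => Qterm i k j l)
  have expand : ∀ i k j l : Fin N, q i j * q k l *
          (s2 ^ 2 + (s3 - s2 ^ 2) * (dd i k + dd i l + dd j k + dd j l)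
            + (s2 + s2 ^ 2 - 2 * s3) * (if i = k ∧ j = l then (1:ℝ) else 0))
      = s2 ^ 2 * (q i j * q k l)
        + (s3 - s2 ^ 2) * (q i j * q k l * (dd i k + dd i l + dd j k + dd j l))
        + (s2 + s2 ^ 2 - 2 * s3) * (q i j * q k l * (if i = k ∧ j = l then (1:ℝ) else 0)) := by
    intro i k j l; ring
  have EZ2' : iidExp n N p (fun X => collisions n N X ^ 2)
      = s2 ^ 2 * ((∑ i : Fin N, ∑ j, q i j) * (∑ i : Fin N, ∑ j, q i j))
        + (s3 - s2 ^ 2) * ((N:ℝ) * ((N:ℝ) - 1) ^ 2)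
        + (s2 + s2 ^ 2 - 2 * s3) * (∑ i : Fin N, ∑ j, q i j) := by
    rw [EZ2]
    rw [Finset.sum_congr rfl (fun i _ => Finset.sum_congr rfl (fun k _ =>
      Finset.sum_congr rfl (fun j _ => Finset.sum_congr rfl (fun l _ => expand i k j l))))]
    simp only [Finset.sum_add_distrib]
    rw [pull (s2 ^ 2) (fun i k j l => q i j * q k l),
      pull (s3 - s2 ^ 2) (fun i k j l => q i j * q k l * (dd i k + dd i l + dd j k + dd j l)),
      pull (s2 + s2 ^ 2 - 2 * s3)
        (fun i k j l => q i j * q k l * (if i = k ∧ j = l then (1:ℝ) else 0))]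
    rw [countT, countD, countU]
  have hP : (∑ i : Fin N, ∑ j, q i j) = (N:ℝ) * ((N:ℝ) - 1) / 2 := by
    have := countP (N := N)
    linarith
  rw [EZ2', EZ, hP, chooseR2, chooseR3]
  ring
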